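/- Correspondence between the covariance-parameterized LQR and its convex reparameterization: (1) for every (L, Σ) ∈ ℒ, the matrix Σ is invertible (indeed positive definite) and LΣ⁻¹ ∈ S; (2) for every V ∈ S, J(V) = min{ f(L, Σ) : (L, Σ) ∈ ℒ and LΣ⁻¹ = V }, and this minimum is attained. -/

import Mathlib

open Matrix

noncomputable section

/-- Euclidean norm of a vector. -/
def eNorm {ι : Type*} [Fintype ι] (v : ι → ℝ) : ℝ :=
  Real.sqrt (∑ i, v i ^ 2)

/-- Frobenius norm of a matrix. -/
def frobNorm {ι κ : Type*} [Fintype ι] [Fintype κ] (A : Matrix ι κ ℝ) : ℝ :=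
  Real.sqrt (∑ i, ∑ j, A i j ^ 2)

/-- Spectral (operator 2-) norm of a matrix. -/
def spNorm {ι κ : Type*} [Fintype ι] [Fintype κ] (A : Matrix ι κ ℝ) : ℝ :=
  sSup {r : ℝ | ∃ v : κ → ℝ, eNorm v = 1 ∧ r = eNorm (A.mulVec v)}

/-- Smallest singular value of a matrix `A`, i.e. the square root of the smallest
eigenvalue of `A * Aᵀ`, expressed as `inf_{‖u‖ = 1} ‖Aᵀ u‖`. -/
def sigMin {ι κ : Type*} [Fintype ι] [Fintype κ] (A : Matrix ι κ ℝ) : ℝ :=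
  sInf {r : ℝ | ∃ u : ι → ℝ, eNorm u = 1 ∧ r = eNorm (A.vecMul u)}

/-- `ρ(A) < 1` : the spectral radius of the real square matrix `A` (i.e. the
largest modulus of a complex eigenvalue) is smaller than one. -/
def specLt1 {ι : Type*} [Fintype ι] [DecidableEq ι] (A : Matrix ι ι ℝ) : Prop :=
  spectralRadius ℂ (A.map Complex.ofReal) < 1

/-- Right inverse `M† = Mᵀ (M Mᵀ)⁻¹` of a full-row-rank matrix. -/
def pinv {ι κ : Type*} [Fintype ι] [Fintype κ] [DecidableEq ι] (A : Matrix ι κ ℝ) :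
    Matrix κ ι ℝ :=
  Aᵀ * (A * Aᵀ)⁻¹

/-- Orthogonal projection `Π_A = I - A† A` onto the nullspace of `A`. -/
def projNull {ι κ : Type*} [Fintype ι] [Fintype κ] [DecidableEq ι] [DecidableEq κ]
    (A : Matrix ι κ ℝ) : Matrix κ κ ℝ :=
  1 - pinv A * A

/-- `Σ(M) = ∑_{i≥0} Mⁱ (Mᵀ)ⁱ`, the unique solution of the discrete Lyapunov
equation `Σ = I + M Σ Mᵀ` when `ρ(M) < 1`. -/
def lyap {k : ℕ} (M : Matrix (Fin k) (Fin k) ℝ) : Matrix (Fin k) (Fin k) ℝ :=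
  ∑' i : ℕ, M ^ i * (Mᵀ) ^ i

variable {n m t : ℕ}

/-- Stacked data matrix `D₀ = [U₀; X₀]`. -/
def Dmat (U0 : Matrix (Fin m) (Fin t) ℝ) (X0 : Matrix (Fin n) (Fin t) ℝ) :
    Matrix (Fin m ⊕ Fin n) (Fin t) ℝ :=
  Matrix.fromRows U0 X0

/-- `Ū₀ = (1/t) U₀ D₀ᵀ`. -/
def Ubar (U0 : Matrix (Fin m) (Fin t) ℝ) (X0 : Matrix (Fin n) (Fin t) ℝ) :
    Matrix (Fin m) (Fin m ⊕ Fin n) ℝ :=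
  (t : ℝ)⁻¹ • (U0 * (Dmat U0 X0)ᵀ)

/-- `X̄₀ = (1/t) X₀ D₀ᵀ`. -/
def Xbar0 (U0 : Matrix (Fin m) (Fin t) ℝ) (X0 : Matrix (Fin n) (Fin t) ℝ) :
    Matrix (Fin n) (Fin m ⊕ Fin n) ℝ :=
  (t : ℝ)⁻¹ • (X0 * (Dmat U0 X0)ᵀ)

/-- `X̄₁ = (1/t) X₁ D₀ᵀ`. -/
def Xbar1 (U0 : Matrix (Fin m) (Fin t) ℝ) (X0 X1 : Matrix (Fin n) (Fin t) ℝ) :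
    Matrix (Fin n) (Fin m ⊕ Fin n) ℝ :=
  (t : ℝ)⁻¹ • (X1 * (Dmat U0 X0)ᵀ)

/-- Sample covariance `Φ = (1/t) D₀ D₀ᵀ`. -/
def Phi (U0 : Matrix (Fin m) (Fin t) ℝ) (X0 : Matrix (Fin n) (Fin t) ℝ) :
    Matrix (Fin m ⊕ Fin n) (Fin m ⊕ Fin n) ℝ :=
  (t : ℝ)⁻¹ • (Dmat U0 X0 * (Dmat U0 X0)ᵀ)

/-- The feasible set `S = {V : X̄₀ V = I, ρ(X̄₁ V) < 1}`. -/
def feasSet (U0 : Matrix (Fin m) (Fin t) ℝ) (X0 X1 : Matrix (Fin n) (Fin t) ℝ) :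
    Set (Matrix (Fin m ⊕ Fin n) (Fin n) ℝ) :=
  {V | Xbar0 U0 X0 * V = 1 ∧ specLt1 (Xbar1 U0 X0 X1 * V)}

/-- The closed-loop Lyapunov solution `Σ_V`, i.e. the unique solution of
`Σ_V = I + (X̄₁ V) Σ_V (X̄₁ V)ᵀ` when `V ∈ S`. -/
def SigV (U0 : Matrix (Fin m) (Fin t) ℝ) (X0 X1 : Matrix (Fin n) (Fin t) ℝ)
    (V : Matrix (Fin m ⊕ Fin n) (Fin n) ℝ) : Matrix (Fin n) (Fin n) ℝ :=
  lyap (Xbar1 U0 X0 X1 * V)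

/-- `P_V`, the unique solution of `P = Q + Vᵀ Ū₀ᵀ R Ū₀ V + (X̄₁V)ᵀ P (X̄₁V)`
when `V ∈ S`, given by its convergent series. -/
def PV (U0 : Matrix (Fin m) (Fin t) ℝ) (X0 X1 : Matrix (Fin n) (Fin t) ℝ)
    (Q : Matrix (Fin n) (Fin n) ℝ) (R : Matrix (Fin m) (Fin m) ℝ)
    (V : Matrix (Fin m ⊕ Fin n) (Fin n) ℝ) : Matrix (Fin n) (Fin n) ℝ :=
  ∑' i : ℕ, ((Xbar1 U0 X0 X1 * V)ᵀ) ^ i *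
      (Q + Vᵀ * (Ubar U0 X0)ᵀ * R * Ubar U0 X0 * V) * (Xbar1 U0 X0 X1 * V) ^ i

/-- The covariance-parameterized LQR cost `J(V)`. -/
def Jcost (U0 : Matrix (Fin m) (Fin t) ℝ) (X0 X1 : Matrix (Fin n) (Fin t) ℝ)
    (Q : Matrix (Fin n) (Fin n) ℝ) (R : Matrix (Fin m) (Fin m) ℝ)
    (V : Matrix (Fin m ⊕ Fin n) (Fin n) ℝ) : ℝ :=
  Matrix.trace ((Q + Vᵀ * (Ubar U0 X0)ᵀ * R * Ubar U0 X0 * V) * SigV U0 X0 X1 V)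

/-- `J* = inf_{V ∈ S} J(V)`. -/
def Jstar (U0 : Matrix (Fin m) (Fin t) ℝ) (X0 X1 : Matrix (Fin n) (Fin t) ℝ)
    (Q : Matrix (Fin n) (Fin n) ℝ) (R : Matrix (Fin m) (Fin m) ℝ) : ℝ :=
  sInf (Jcost U0 X0 X1 Q R '' feasSet U0 X0 X1)

/-- Sublevel set `S(a) = {V ∈ S : J(V) ≤ a}`. -/
def subLevel (U0 : Matrix (Fin m) (Fin t) ℝ) (X0 X1 : Matrix (Fin n) (Fin t) ℝ)
    (Q : Matrix (Fin n) (Fin n) ℝ) (R : Matrix (Fin m) (Fin m) ℝ) (a : ℝ) :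
    Set (Matrix (Fin m ⊕ Fin n) (Fin n) ℝ) :=
  {V | V ∈ feasSet U0 X0 X1 ∧ Jcost U0 X0 X1 Q R V ≤ a}

/-- The gradient `∇J(V) = 2 (Ū₀ᵀ R Ū₀ + X̄₁ᵀ P_V X̄₁) V Σ_V`. -/
def gradJ (U0 : Matrix (Fin m) (Fin t) ℝ) (X0 X1 : Matrix (Fin n) (Fin t) ℝ)
    (Q : Matrix (Fin n) (Fin n) ℝ) (R : Matrix (Fin m) (Fin m) ℝ)
    (V : Matrix (Fin m ⊕ Fin n) (Fin n) ℝ) : Matrix (Fin m ⊕ Fin n) (Fin n) ℝ :=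
  (2 : ℝ) • (((Ubar U0 X0)ᵀ * R * Ubar U0 X0 +
      (Xbar1 U0 X0 X1)ᵀ * PV U0 X0 X1 Q R V * Xbar1 U0 X0 X1) * V * SigV U0 X0 X1 V)

/-- `ξ(a) = ‖Ū₀‖² ‖R‖ + ‖X̄₁‖² a`. -/
def xiC (U0 : Matrix (Fin m) (Fin t) ℝ) (X0 X1 : Matrix (Fin n) (Fin t) ℝ)
    (R : Matrix (Fin m) (Fin m) ℝ) (a : ℝ) : ℝ :=
  spNorm (Ubar U0 X0) ^ 2 * spNorm R + spNorm (Xbar1 U0 X0 X1) ^ 2 * a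

/-- Smoothness constant `l(a)`. -/
def lC (U0 : Matrix (Fin m) (Fin t) ℝ) (X0 X1 : Matrix (Fin n) (Fin t) ℝ)
    (Q : Matrix (Fin n) (Fin n) ℝ) (R : Matrix (Fin m) (Fin m) ℝ) (a : ℝ) : ℝ :=
  4 * a ^ 2 * (xiC U0 X0 X1 R a + a - sigMin Q) * frobNorm (Xbar1 U0 X0 X1) ^ 2 / sigMin Q ^ 2 +
    2 * xiC U0 X0 X1 R a * a / sigMin Q

/-- Gradient-dominance constant `μ(a) = 4a²/(σ̲(Q)^{3/2} σ̲(R)^{1/2} σ̲(Ū₀))`. -/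
def muC (U0 : Matrix (Fin m) (Fin t) ℝ) (X0 : Matrix (Fin n) (Fin t) ℝ)
    (Q : Matrix (Fin n) (Fin n) ℝ) (R : Matrix (Fin m) (Fin m) ℝ) (a : ℝ) : ℝ :=
  4 * a ^ 2 / (Real.sqrt (sigMin Q) ^ 3 * Real.sqrt (sigMin R) * sigMin (Ubar U0 X0))

/-- Reparameterized cost `f(L, Σ) = Tr(QΣ) + Tr(L Σ⁻¹ Lᵀ Ū₀ᵀ R Ū₀)`. -/
def fRep (U0 : Matrix (Fin m) (Fin t) ℝ) (X0 : Matrix (Fin n) (Fin t) ℝ)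
    (Q : Matrix (Fin n) (Fin n) ℝ) (R : Matrix (Fin m) (Fin m) ℝ)
    (L : Matrix (Fin m ⊕ Fin n) (Fin n) ℝ) (Sg : Matrix (Fin n) (Fin n) ℝ) : ℝ :=
  Matrix.trace (Q * Sg) + Matrix.trace (L * Sg⁻¹ * Lᵀ * (Ubar U0 X0)ᵀ * R * Ubar U0 X0)

/-- Feasible set `ℒ` of the convex reparameterization. -/
def repSet (U0 : Matrix (Fin m) (Fin t) ℝ) (X0 X1 : Matrix (Fin n) (Fin t) ℝ) :
    Set (Matrix (Fin m ⊕ Fin n) (Fin n) ℝ × Matrix (Fin n) (Fin n) ℝ) :=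
  {p | p.2.IsSymm ∧ p.2 = Xbar0 U0 X0 * p.1 ∧
    (Matrix.fromBlocks (p.2 - 1) (Xbar1 U0 X0 X1 * p.1)
      ((Xbar1 U0 X0 X1 * p.1)ᵀ) p.2).PosSemidef}

/-- `p(a) = (16a³/(σ̲(Q)²ζ)) (1 + a/σ̲(Q)) (1 + √(a/σ̲(R)))`. -/
def pC (Q : Matrix (Fin n) (Fin n) ℝ) (R : Matrix (Fin m) (Fin m) ℝ) (ζ a : ℝ) : ℝ :=
  16 * a ^ 3 / (sigMin Q ^ 2 * ζ) * (1 + a / sigMin Q) * (1 + Real.sqrt (a / sigMin R))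

open scoped NNReal ENNReal ComplexOrder

namespace Aux


attribute [local instance] Matrix.linftyOpNormedAddCommGroup Matrix.linftyOpNormedRing
  Matrix.linftyOpNormedAlgebra

lemma entry_le_norm {k : ℕ} (B : Matrix (Fin k) (Fin k) ℂ) (a b : Fin k) :
    ‖B a b‖ ≤ ‖B‖ := by
  have h1 : ‖B a b‖₊ ≤ ‖B‖₊ := by
    rw [Matrix.linfty_opNNNorm_def]
    refine le_trans ?_ (Finset.le_sup (Finset.mem_univ a))
    exact Finset.single_le_sum (f := fun j => ‖B a j‖₊) (fun j _ => zero_le) (Finset.mem_univ b)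
  exact_mod_cast h1

lemma map_pow_ofReal {k : ℕ} (M : Matrix (Fin k) (Fin k) ℝ) (i : ℕ) :
    (M.map Complex.ofReal) ^ i = (M ^ i).map Complex.ofReal := by
  have : (M.map Complex.ofReal) = Complex.ofRealHom.mapMatrix M := rfl
  rw [this, ← map_pow]
  rfl

lemma entry_bound {k : ℕ} {M : Matrix (Fin k) (Fin k) ℝ} (h : specLt1 M) :
    ∃ C r : ℝ, 0 ≤ C ∧ 0 < r ∧ r < 1 ∧ ∀ (i : ℕ) (a b : Fin k), |(M ^ i) a b| ≤ C * r ^ i := by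
  set A := M.map Complex.ofReal with hA
  have htend := spectrum.pow_nnnorm_pow_one_div_tendsto_nhds_spectralRadius A
  obtain ⟨c, hc1, hc2⟩ := ENNReal.lt_iff_exists_nnreal_btwn.mp h
  set r : ℝ≥0 := max c (1/2) with hrdef
  have hr0 : 0 < r := lt_of_lt_of_le (by norm_num) (le_max_right _ _)
  have hr1 : r < 1 := by
    have hc2' : c < 1 := by exact_mod_cast hc2
    exact max_lt hc2' (by rw [← NNReal.coe_lt_coe]; norm_num)
  have hcr : spectralRadius ℂ A < (r : ℝ≥0∞) := lt_of_lt_of_le hc1 (by exact_mod_cast le_max_left _ _)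
  have hev : ∀ᶠ i : ℕ in Filter.atTop, (‖A ^ i‖₊ : ℝ≥0∞) ^ (1 / (i : ℝ)) < (r : ℝ≥0∞) :=
    htend.eventually_lt_const hcr
  obtain ⟨N, hN⟩ := Filter.eventually_atTop.mp hev
  have hpow : ∀ i : ℕ, N + 1 ≤ i → ‖A ^ i‖ ≤ (r : ℝ) ^ i := by
    intro i hi
    have hi0 : (i : ℝ) ≠ 0 := Nat.cast_ne_zero.mpr (by omega)
    have h1 : (‖A ^ i‖₊ : ℝ≥0∞) ^ (1 / (i : ℝ)) < (r : ℝ≥0∞) := hN i (by omega)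
    have h2 : ((‖A ^ i‖₊ : ℝ≥0∞) ^ (1 / (i : ℝ))) ^ (i : ℝ) ≤ (r : ℝ≥0∞) ^ (i : ℝ) :=
      ENNReal.rpow_le_rpow h1.le (Nat.cast_nonneg i)
    rw [← ENNReal.rpow_mul, one_div, inv_mul_cancel₀ hi0, ENNReal.rpow_one] at h2
    have hco : ((r : ℝ≥0∞) ^ (i : ℝ)) = ((r ^ i : ℝ≥0) : ℝ≥0∞) := by
      rw [← ENNReal.coe_rpow_of_nonneg _ (Nat.cast_nonneg i), NNReal.rpow_natCast]
    have h3 : (‖A ^ i‖₊ : ℝ≥0∞) ≤ ((r ^ i : ℝ≥0) : ℝ≥0∞) := h2.trans_eq hco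
    have h4 : ‖A ^ i‖₊ ≤ r ^ i := by exact_mod_cast h3
    calc ‖A ^ i‖ = ((‖A ^ i‖₊ : ℝ)) := rfl
    _ ≤ ((r ^ i : ℝ≥0) : ℝ) := by exact_mod_cast h4
    _ = (r : ℝ) ^ i := by push_cast; ring
  set C : ℝ := (∑ j ∈ Finset.range (N + 1), ‖A ^ j‖ / (r : ℝ) ^ j) + 1 with hC
  have hCnn : ∀ j ∈ Finset.range (N+1), 0 ≤ ‖A ^ j‖ / (r : ℝ) ^ j :=
    fun j _ => div_nonneg (norm_nonneg _) (pow_nonneg hr0.le _)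
  have hC1 : 1 ≤ C := le_add_of_nonneg_left (Finset.sum_nonneg hCnn)
  have hnormC : ∀ i : ℕ, ‖A ^ i‖ ≤ C * (r : ℝ) ^ i := by
    intro i
    rcases lt_or_ge i (N + 1) with hi | hi
    · have h1 : ‖A ^ i‖ / (r : ℝ) ^ i ≤ C := by
        refine le_trans ?_ (le_add_of_nonneg_right zero_le_one)
        exact Finset.single_le_sum hCnn (Finset.mem_range.mpr hi)
      have hrpos : (0:ℝ) < (r:ℝ) ^ i := pow_pos hr0 i
      calc ‖A ^ i‖ = (‖A ^ i‖ / (r : ℝ) ^ i) * (r:ℝ) ^ i := by field_simp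
      _ ≤ C * (r:ℝ) ^ i := by apply mul_le_mul_of_nonneg_right h1 hrpos.le
    · calc ‖A ^ i‖ ≤ (r : ℝ) ^ i := hpow i hi
      _ ≤ C * (r:ℝ) ^ i := le_mul_of_one_le_left (pow_nonneg hr0.le _) hC1
  refine ⟨C, r, le_trans zero_le_one hC1, hr0, by exact_mod_cast hr1, fun i a b => ?_⟩
  have h1 : |(M ^ i) a b| = ‖(A ^ i) a b‖ := by
    rw [map_pow_ofReal, Matrix.map_apply, Complex.norm_real]
    rfl
  rw [h1]
  exact le_trans (entry_le_norm _ a b) (hnormC i)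


variable {k : ℕ}



variable {k : ℕ}

lemma summable_pows {M : Matrix (Fin k) (Fin k) ℝ} (h : specLt1 M) :
    Summable fun i : ℕ => M ^ i * (Mᵀ) ^ i := by
  obtain ⟨C, r, hC, hr0, hr1, hb⟩ := entry_bound h
  refine Pi.summable.mpr fun a => Pi.summable.mpr fun b => ?_
  have hgeo : Summable fun i : ℕ => (k * C ^ 2) * (r ^ 2) ^ i :=
    (summable_geometric_of_lt_one (by positivity) (by nlinarith)).mul_left _
  refine Summable.of_abs (hgeo.of_nonneg_of_le (fun i => abs_nonneg _) fun i => ?_)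
  have h1 : (M ^ i * (Mᵀ) ^ i) a b = ∑ c, (M ^ i) a c * (M ^ i) b c := by
    simp [Matrix.mul_apply, ← Matrix.transpose_pow, Matrix.transpose_apply]
  rw [h1]
  calc |∑ c, (M ^ i) a c * (M ^ i) b c| ≤ ∑ c, |(M ^ i) a c * (M ^ i) b c| :=
        Finset.abs_sum_le_sum_abs _ _
  _ ≤ ∑ _c : Fin k, (C * r ^ i) * (C * r ^ i) := by
      refine Finset.sum_le_sum fun c _ => ?_
      rw [abs_mul]
      exact mul_le_mul (hb i a c) (hb i b c) (abs_nonneg _) (by positivity)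
  _ = (k * C ^ 2) * (r ^ 2) ^ i := by
      rw [Finset.sum_const, Finset.card_univ, Fintype.card_fin, nsmul_eq_mul,
        pow_right_comm]
      ring

/-- quadratic-form functional as a continuous linear map -/
def qf (x : Fin k → ℝ) : Matrix (Fin k) (Fin k) ℝ →L[ℝ] ℝ :=
  have lm : Matrix (Fin k) (Fin k) ℝ →ₗ[ℝ] ℝ :=
    { toFun := fun S => x ⬝ᵥ (S *ᵥ x)
      map_add' := fun S T => by simp [Matrix.add_mulVec, dotProduct_add]
      map_smul' := fun c S => by simp [Matrix.smul_mulVec, dotProduct_smul] }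
  ⟨lm, lm.continuous_of_finiteDimensional⟩

@[simp] lemma qf_apply (x : Fin k → ℝ) (S : Matrix (Fin k) (Fin k) ℝ) :
    qf x S = x ⬝ᵥ (S *ᵥ x) := rfl

/-- conjugation `S ↦ M * S * Mᵀ` as a continuous linear map -/
def conjCLM (M : Matrix (Fin k) (Fin k) ℝ) :
    Matrix (Fin k) (Fin k) ℝ →L[ℝ] Matrix (Fin k) (Fin k) ℝ :=
  have lm : Matrix (Fin k) (Fin k) ℝ →ₗ[ℝ] Matrix (Fin k) (Fin k) ℝ :=
    { toFun := fun S => M * S * Mᵀ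
      map_add' := fun S T => by simp [Matrix.mul_add, Matrix.add_mul]
      map_smul' := fun c S => by simp [Matrix.mul_smul, Matrix.smul_mul] }
  ⟨lm, lm.continuous_of_finiteDimensional⟩

@[simp] lemma conjCLM_apply (M S : Matrix (Fin k) (Fin k) ℝ) :
    conjCLM M S = M * S * Mᵀ := rfl

/-- transpose as a continuous linear map -/
def trCLM : Matrix (Fin k) (Fin k) ℝ →L[ℝ] Matrix (Fin k) (Fin k) ℝ :=
  have lm : Matrix (Fin k) (Fin k) ℝ →ₗ[ℝ] Matrix (Fin k) (Fin k) ℝ :=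
    { toFun := fun S => Sᵀ
      map_add' := fun S T => by simp [Matrix.transpose_add]
      map_smul' := fun c S => by simp [Matrix.transpose_smul] }
  ⟨lm, lm.continuous_of_finiteDimensional⟩

@[simp] lemma trCLM_apply (S : Matrix (Fin k) (Fin k) ℝ) : trCLM S = Sᵀ := rfl

lemma lyap_transpose {M : Matrix (Fin k) (Fin k) ℝ} (h : specLt1 M) :
    (lyap M)ᵀ = lyap M := by
  have hs := summable_pows h
  have h1 : (lyap M)ᵀ = trCLM (lyap M) := rfl
  rw [h1, lyap, trCLM.map_tsum hs]
  refine tsum_congr fun i => ?_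
  simp [Matrix.transpose_mul, Matrix.transpose_pow]

lemma lyap_fixed {M : Matrix (Fin k) (Fin k) ℝ} (h : specLt1 M) :
    lyap M = 1 + M * lyap M * Mᵀ := by
  have hs := summable_pows h
  have h1 : M * lyap M * Mᵀ = conjCLM M (lyap M) := rfl
  rw [h1, lyap, (conjCLM M).map_tsum hs]
  have h2 : ∀ i : ℕ, conjCLM M (M ^ i * (Mᵀ) ^ i) = M ^ (i+1) * (Mᵀ) ^ (i+1) := by
    intro i
    have e1 : M ^ (i+1) = M * M ^ i := pow_succ' M i
    have e2 : (Mᵀ) ^ (i+1) = (Mᵀ) ^ i * Mᵀ := pow_succ (Mᵀ) i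
    rw [conjCLM_apply, e1, e2]
    noncomm_ring
  rw [tsum_congr h2]
  rw [hs.tsum_eq_zero_add]
  simp

lemma star_eq_self (x : Fin k → ℝ) : star x = x := by
  funext i; simp

lemma conjT_eq_transpose {a b : ℕ} (A : Matrix (Fin a) (Fin b) ℝ) : Aᴴ = Aᵀ :=
  Matrix.conjTranspose_eq_transpose_of_trivial A

lemma psd_of_symm_form {S : Matrix (Fin k) (Fin k) ℝ} (hsym : Sᵀ = S)
    (hform : ∀ x : Fin k → ℝ, 0 ≤ x ⬝ᵥ (S *ᵥ x)) : S.PosSemidef := by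
  refine Matrix.PosSemidef.of_dotProduct_mulVec_nonneg (by rw [Matrix.IsHermitian, conjT_eq_transpose, hsym]) fun x => ?_
  rw [star_eq_self]; exact hform x

lemma form_nonneg_of_psd {S : Matrix (Fin k) (Fin k) ℝ} (h : S.PosSemidef)
    (x : Fin k → ℝ) : 0 ≤ x ⬝ᵥ (S *ᵥ x) := by
  have := h.dotProduct_mulVec_nonneg x; rwa [star_eq_self] at this

lemma psd_term (M : Matrix (Fin k) (Fin k) ℝ) (i : ℕ) :
    (M ^ i * (Mᵀ) ^ i).PosSemidef := by
  have := Matrix.posSemidef_self_mul_conjTranspose (M ^ i)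
  rwa [conjT_eq_transpose, Matrix.transpose_pow] at this

lemma lyap_posSemidef {M : Matrix (Fin k) (Fin k) ℝ} (h : specLt1 M) :
    (lyap M).PosSemidef := by
  have hs := summable_pows h
  refine psd_of_symm_form (lyap_transpose h) fun x => ?_
  have h1 : x ⬝ᵥ (lyap M *ᵥ x) = qf x (lyap M) := rfl
  rw [h1, lyap, (qf x).map_tsum hs]
  exact tsum_nonneg fun i => form_nonneg_of_psd (psd_term M i) x

lemma lyap_sub_one_psd {M : Matrix (Fin k) (Fin k) ℝ} (h : specLt1 M) :
    (lyap M - 1).PosSemidef := by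
  have h1 : lyap M - 1 = M * lyap M * Mᵀ := by
    nth_rewrite 1 [lyap_fixed h]
    exact add_sub_cancel_left 1 _
  rw [h1]
  have := (lyap_posSemidef h).mul_mul_conjTranspose_same M
  rwa [conjT_eq_transpose] at this

lemma lyap_posDef {M : Matrix (Fin k) (Fin k) ℝ} (h : specLt1 M) :
    (lyap M).PosDef := by
  have := Matrix.PosDef.posSemidef_add (lyap_sub_one_psd h) (Matrix.PosDef.one (n := Fin k) (R := ℝ))
  rwa [sub_add_cancel] at this

/-- Comparison: any PSD solution of the Lyapunov inequality dominates `lyap M`. -/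
lemma lyap_le {M S : Matrix (Fin k) (Fin k) ℝ} (h : specLt1 M)
    (hS : S.PosSemidef) (hineq : (S - 1 - M * S * Mᵀ).PosSemidef) :
    (S - lyap M).PosSemidef := by
  have hs := summable_pows h
  have key : ∀ N : ℕ,
      (S - (∑ i ∈ Finset.range N, M ^ i * (Mᵀ) ^ i) - M ^ N * S * (Mᵀ) ^ N).PosSemidef := by
    intro N
    induction N with
    | zero => simp [Matrix.PosSemidef.zero]
    | succ N ih =>
      have e1 : M ^ (N+1) = M ^ N * M := pow_succ M N
      have e2 : (Mᵀ) ^ (N+1) = Mᵀ * (Mᵀ) ^ N := pow_succ' (Mᵀ) N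
      have e3 : S - (∑ i ∈ Finset.range (N+1), M ^ i * (Mᵀ) ^ i)
            - M ^ (N+1) * S * (Mᵀ) ^ (N+1)
          = (S - (∑ i ∈ Finset.range N, M ^ i * (Mᵀ) ^ i) - M ^ N * S * (Mᵀ) ^ N)
            + M ^ N * (S - 1 - M * S * Mᵀ) * (Mᵀ) ^ N := by
        rw [Finset.sum_range_succ, e1, e2]
        noncomm_ring
      rw [e3]
      refine ih.add ?_
      have := hineq.mul_mul_conjTranspose_same (M ^ N)
      rwa [conjT_eq_transpose, Matrix.transpose_pow] at this
  have hsymm : (S - lyap M)ᵀ = S - lyap M := by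
    rw [Matrix.transpose_sub, lyap_transpose h, ← conjT_eq_transpose, hS.1.eq]
  refine psd_of_symm_form hsymm fun x => ?_
  have hform : ∀ N : ℕ, ∑ i ∈ Finset.range N, qf x (M ^ i * (Mᵀ) ^ i) ≤ qf x S := by
    intro N
    have h1 := form_nonneg_of_psd (key N) x
    have h2 : (0:ℝ) ≤ qf x (M ^ N * S * (Mᵀ) ^ N) := by
      have hP : (M ^ N * S * (Mᵀ) ^ N).PosSemidef := by
        have := hS.mul_mul_conjTranspose_same (M ^ N)
        rwa [conjT_eq_transpose, Matrix.transpose_pow] at this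
      exact form_nonneg_of_psd hP x
    have h3 : qf x (S - (∑ i ∈ Finset.range N, M ^ i * (Mᵀ) ^ i) - M ^ N * S * (Mᵀ) ^ N)
        = qf x S - (∑ i ∈ Finset.range N, qf x (M ^ i * (Mᵀ) ^ i))
          - qf x (M ^ N * S * (Mᵀ) ^ N) := by
      rw [map_sub, map_sub, map_sum]
    have h4 : x ⬝ᵥ ((S - (∑ i ∈ Finset.range N, M ^ i * (Mᵀ) ^ i)
        - M ^ N * S * (Mᵀ) ^ N) *ᵥ x) = qf x (S - (∑ i ∈ Finset.range N, M ^ i * (Mᵀ) ^ i)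
        - M ^ N * S * (Mᵀ) ^ N) := rfl
    rw [h4, h3] at h1
    linarith
  have htsum : qf x (lyap M) ≤ qf x S := by
    rw [lyap, (qf x).map_tsum hs]
    exact Real.tsum_le_of_sum_range_le
      (fun i => form_nonneg_of_psd (psd_term M i) x) hform
  have : x ⬝ᵥ ((S - lyap M) *ᵥ x) = qf x S - qf x (lyap M) := by
    show qf x (S - lyap M) = _
    rw [map_sub]
  rw [this]
  linarith

lemma psd_diag_nonneg {S : Matrix (Fin k) (Fin k) ℝ} (h : S.PosSemidef) (i : Fin k) :
    0 ≤ S i i := by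
  have := form_nonneg_of_psd h (Pi.single i 1)
  simpa [Matrix.mulVec_single, dotProduct, Pi.single_apply] using this

lemma trace_psd_nonneg {S : Matrix (Fin k) (Fin k) ℝ} (h : S.PosSemidef) :
    0 ≤ S.trace :=
  Finset.sum_nonneg fun i _ => psd_diag_nonneg h i

lemma trace_mul_psd_nonneg {A B : Matrix (Fin k) (Fin k) ℝ}
    (hA : A.PosSemidef) (hB : B.PosSemidef) : 0 ≤ (A * B).trace := by
  obtain ⟨C, hC⟩ : ∃ C : Matrix (Fin k) (Fin k) ℝ, B = Cᴴ * C := by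
    open scoped MatrixOrder in
    obtain ⟨X, hX, -, hXX⟩ := CFC.exists_sqrt_of_isSelfAdjoint_of_quasispectrumRestricts (a := B)
      hB.isHermitian (QuasispectrumRestricts.nnreal_of_nonneg hB.nonneg)
    exact ⟨X, by rw [← hXX, ← star_eq_conjTranspose, hX.star_eq]⟩
  have h1 : (A * B).trace = (C * A * Cᴴ).trace := by
    rw [hC, Matrix.trace_mul_comm, Matrix.mul_assoc, Matrix.mul_assoc,
      Matrix.trace_mul_comm, Matrix.mul_assoc]
  rw [h1]
  exact trace_psd_nonneg (hA.mul_mul_conjTranspose_same C)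





lemma map_mul_ofReal (A B : Matrix (Fin k) (Fin k) ℝ) :
    (A * B).map Complex.ofReal = A.map Complex.ofReal * B.map Complex.ofReal := by
  have : ∀ X : Matrix (Fin k) (Fin k) ℝ, X.map Complex.ofReal = Complex.ofRealHom.mapMatrix X :=
    fun _ => rfl
  rw [this, this, this, _root_.map_mul]

lemma map_one_ofReal : ((1 : Matrix (Fin k) (Fin k) ℝ).map Complex.ofReal) = 1 := by
  have : (1 : Matrix (Fin k) (Fin k) ℝ).map Complex.ofReal
      = Complex.ofRealHom.mapMatrix (1 : Matrix (Fin k) (Fin k) ℝ) := rfl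
  rw [this, _root_.map_one]

lemma map_sub_ofReal (A B : Matrix (Fin k) (Fin k) ℝ) :
    (A - B).map Complex.ofReal = A.map Complex.ofReal - B.map Complex.ofReal := by
  ext i j; simp [Matrix.map_apply, Complex.ofReal_sub]

lemma conjT_map_ofReal (A : Matrix (Fin k) (Fin k) ℝ) :
    (A.map Complex.ofReal)ᴴ = Aᵀ.map Complex.ofReal := by
  ext i j
  simp [Matrix.conjTranspose_apply, Matrix.map_apply, Complex.conj_ofReal]

/-- complexified quadratic form of a real PSD matrix is a nonnegative real -/
lemma psd_complex_q {B : Matrix (Fin k) (Fin k) ℝ} (hB : B.PosSemidef) (v : Fin k → ℂ) :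
    ∃ c : ℝ, 0 ≤ c ∧ star v ⬝ᵥ ((B.map Complex.ofReal) *ᵥ v) = (c : ℂ) := by
  set x : Fin k → ℝ := fun i => (v i).re with hx
  set y : Fin k → ℝ := fun i => (v i).im with hy
  have hsymm : ∀ i j, B j i = B i j := by
    intro i j
    have := congrFun (congrFun hB.1 i) j
    simpa [Matrix.conjTranspose_apply] using this
  refine ⟨x ⬝ᵥ (B *ᵥ x) + y ⬝ᵥ (B *ᵥ y), ?_, ?_⟩
  · have h1 := hB.dotProduct_mulVec_nonneg x
    have h2 := hB.dotProduct_mulVec_nonneg y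
    rw [show star x = x by funext i; simp] at h1
    rw [show star y = y by funext i; simp] at h2
    linarith
  · have expand : star v ⬝ᵥ ((B.map Complex.ofReal) *ᵥ v)
        = ∑ i, ∑ j, (starRingEnd ℂ) (v i) * ((B i j : ℂ) * v j) := by
      simp [dotProduct, Matrix.mulVec, Matrix.map_apply, Finset.mul_sum, Complex.star_def]
    rw [expand]
    apply Complex.ext
    · rw [Complex.re_sum]
      have : ∀ i ∈ Finset.univ, (∑ j, (starRingEnd ℂ) (v i) * ((B i j : ℂ) * v j)).re
          = ∑ j, (B i j * (x i * x j) + B i j * (y i * y j)) := by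
        intro i _
        rw [Complex.re_sum]
        refine Finset.sum_congr rfl fun j _ => ?_
        simp [Complex.mul_re, Complex.mul_im, Complex.conj_re, Complex.conj_im, hx, hy]
        ring
      rw [Finset.sum_congr rfl this]
      simp only [Complex.ofReal_re, dotProduct, Matrix.mulVec, Finset.mul_sum]
      rw [← Finset.sum_add_distrib]
      refine Finset.sum_congr rfl fun i _ => ?_
      rw [← Finset.sum_add_distrib]
      exact Finset.sum_congr rfl fun j _ => by ring
    · rw [Complex.im_sum]
      have : ∀ i ∈ Finset.univ, (∑ j, (starRingEnd ℂ) (v i) * ((B i j : ℂ) * v j)).im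
          = ∑ j, (B i j * (x i * y j) - B i j * (y i * x j)) := by
        intro i _
        rw [Complex.im_sum]
        refine Finset.sum_congr rfl fun j _ => ?_
        simp [Complex.mul_re, Complex.mul_im, Complex.conj_re, Complex.conj_im, hx, hy]
        ring
      rw [Finset.sum_congr rfl this]
      have hswap : ∑ i, ∑ j, B i j * (y i * x j) = ∑ i, ∑ j, B i j * (x i * y j) := by
        rw [Finset.sum_comm]
        exact Finset.sum_congr rfl fun i _ => Finset.sum_congr rfl fun j _ => by
          rw [hsymm]; ring
      simp only [Finset.sum_sub_distrib]
      rw [hswap, sub_self]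
      simp

attribute [local instance] Matrix.linftyOpNormedAddCommGroup Matrix.linftyOpNormedRing
  Matrix.linftyOpNormedAlgebra

lemma specLt1_of_lyapIneq (hk : 0 < k) {M S : Matrix (Fin k) (Fin k) ℝ}
    (hS1 : (S - 1).PosSemidef) (hineq : (S - 1 - M * S * Mᵀ).PosSemidef) :
    specLt1 M := by
  haveI : Nonempty (Fin k) := ⟨⟨0, hk⟩⟩
  set A := M.map Complex.ofReal with hAdef
  have hS : S.PosSemidef := by
    have := Matrix.PosDef.posSemidef_add hS1 (Matrix.PosDef.one (n := Fin k) (R := ℝ))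
    rw [sub_add_cancel] at this
    exact this.posSemidef
  have hlt : ∀ lam ∈ spectrum ℂ A, ‖lam‖₊ < 1 := by
    intro lam hlam
    -- get an eigenvector of Aᵀ
    have hdet : ((lam • (1 : Matrix (Fin k) (Fin k) ℂ)) - A).det = 0 := by
      rw [spectrum.mem_iff] at hlam
      by_contra hd
      exact hlam (by
        rw [Algebra.algebraMap_eq_smul_one]
        exact (Matrix.isUnit_iff_isUnit_det _).mpr (isUnit_iff_ne_zero.mpr hd))
    have hdetT : ((lam • (1 : Matrix (Fin k) (Fin k) ℂ)) - Aᵀ).det = 0 := by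
      rw [← Matrix.det_transpose] at hdet
      rwa [Matrix.transpose_sub, Matrix.transpose_smul, Matrix.transpose_one] at hdet
    obtain ⟨v, hv0, hveq⟩ := (Matrix.exists_mulVec_eq_zero_iff).mpr hdetT
    have heig : Aᵀ *ᵥ v = lam • v := by
      have h1 : (lam • (1 : Matrix (Fin k) (Fin k) ℂ)) *ᵥ v - Aᵀ *ᵥ v = 0 := by
        rw [← Matrix.sub_mulVec, hveq]
      have h2 : (lam • (1 : Matrix (Fin k) (Fin k) ℂ)) *ᵥ v = lam • v := by
        rw [Matrix.smul_mulVec, Matrix.one_mulVec]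
      rw [h2] at h1
      exact (sub_eq_zero.mp h1).symm
    -- quadratic forms
    obtain ⟨a, ha0, hqa⟩ := psd_complex_q hS v
    obtain ⟨c, hc0, hqc⟩ := psd_complex_q hineq v
    have hq1 : star v ⬝ᵥ (((1 : Matrix (Fin k) (Fin k) ℝ).map Complex.ofReal) *ᵥ v)
        = star v ⬝ᵥ v := by rw [map_one_ofReal, Matrix.one_mulVec]
    have hd : 0 < star v ⬝ᵥ v := Matrix.dotProduct_star_self_pos_iff.mpr hv0
    -- q (M*S*Mᵀ) = lam * conj lam * a
    have hmt : (Mᵀ).map Complex.ofReal = Aᵀ := by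
      ext i j; simp [hAdef, Matrix.map_apply, Matrix.transpose_apply]
    have hAH : Aᴴ = Aᵀ := by rw [conjT_map_ofReal, hmt]
    have hvm : star v ᵥ* A = (starRingEnd ℂ) lam • star v := by
      have h1 : star (Aᴴ *ᵥ v) = star v ᵥ* A := by
        rw [Matrix.star_mulVec, Matrix.conjTranspose_conjTranspose]
      rw [← h1, hAH, heig, star_smul]
      rfl
    have hqm : star v ⬝ᵥ (((M * S * Mᵀ).map Complex.ofReal) *ᵥ v)
        = lam * ((starRingEnd ℂ) lam * (a : ℂ)) := by
      rw [map_mul_ofReal, map_mul_ofReal, hmt, ← hAdef]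
      rw [← Matrix.mulVec_mulVec, ← Matrix.mulVec_mulVec, heig, Matrix.mulVec_smul,
        Matrix.mulVec_smul, dotProduct_smul]
      rw [Matrix.dotProduct_mulVec, hvm, smul_dotProduct, hqa]
      simp [smul_eq_mul]
    -- assemble
    have htotal : (c : ℂ) = (a : ℂ) - (star v ⬝ᵥ v) - lam * ((starRingEnd ℂ) lam * (a : ℂ)) := by
      rw [← hqc, map_sub_ofReal, map_sub_ofReal, Matrix.sub_mulVec, Matrix.sub_mulVec,
        dotProduct_sub, dotProduct_sub, hqa, hq1, hqm]
    have hdre : 0 < (star v ⬝ᵥ v).re ∧ (star v ⬝ᵥ v).im = 0 := by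
      rw [Complex.lt_def] at hd
      constructor
      · simpa using hd.1
      · simpa using hd.2.symm
    have hmc : lam * ((starRingEnd ℂ) lam * (a : ℂ)) = ((Complex.normSq lam * a : ℝ) : ℂ) := by
      rw [← mul_assoc, Complex.mul_conj]
      push_cast
      ring
    have hre : c = a - (star v ⬝ᵥ v).re - Complex.normSq lam * a := by
      have := congrArg Complex.re htotal
      rw [hmc] at this
      simpa using this
    have hnsq : Complex.normSq lam < 1 := by nlinarith [hdre.1]
    have habs : ‖lam‖ < 1 := by
      nlinarith [Complex.sq_norm lam, norm_nonneg lam]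
    have : ‖lam‖ < 1 := habs
    exact_mod_cast this
  have hne : (spectrum ℂ A).Nonempty := spectrum.nonempty A
  have := spectrum.spectralRadius_lt_of_forall_lt_of_nonempty hne (r := 1) hlt
  simpa [specLt1] using this


end Aux


section MainAux

variable {n m t : ℕ}

lemma repSet_struct (hn : 0 < n)
    (U0 : Matrix (Fin m) (Fin t) ℝ) (X0 X1 : Matrix (Fin n) (Fin t) ℝ)
    (p : Matrix (Fin m ⊕ Fin n) (Fin n) ℝ × Matrix (Fin n) (Fin n) ℝ)
    (hp : p ∈ repSet U0 X0 X1) :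
    p.2.PosDef ∧
    (p.2 - 1 - (Xbar1 U0 X0 X1 * (p.1 * p.2⁻¹)) * p.2 *
      (Xbar1 U0 X0 X1 * (p.1 * p.2⁻¹))ᵀ).PosSemidef ∧
    p.1 * p.2⁻¹ ∈ feasSet U0 X0 X1 := by
  obtain ⟨hsym, hXL, hblk⟩ := hp
  set L := p.1 with hLdef
  set S := p.2 with hSdef
  set Xb0 := Xbar0 U0 X0
  set Xb1 := Xbar1 U0 X0 X1
  have hsym' : Sᵀ = S := hsym
  have hS1 : (S - 1).PosSemidef := by
    refine Aux.psd_of_symm_form (by rw [Matrix.transpose_sub, hsym', Matrix.transpose_one]) ?_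
    intro x
    have hz : star (Sum.elim x (0 : Fin n → ℝ)) = Sum.elim x 0 := by funext i; simp
    have h := hblk.dotProduct_mulVec_nonneg (Sum.elim x 0)
    rw [hz] at h
    rw [Matrix.fromBlocks_mulVec] at h
    simpa [Sum.elim_comp_inl, Sum.elim_comp_inr, dotProduct, Fintype.sum_sum_type,
      Matrix.mulVec_zero] using h
  have hSpd : S.PosDef := by
    have := Matrix.PosDef.posSemidef_add hS1 (Matrix.PosDef.one (n := Fin n) (R := ℝ))
    rwa [sub_add_cancel] at this
  have hdet : IsUnit S.det := (Matrix.isUnit_iff_isUnit_det S).mp hSpd.isUnit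
  letI : Invertible S := hSpd.isUnit.invertible
  have hblk' : (Matrix.fromBlocks (S - 1) (Xb1 * L) ((Xb1 * L)ᴴ) S).PosSemidef := by
    rwa [Matrix.conjTranspose_eq_transpose_of_trivial]
  have hschur := (Matrix.PosDef.fromBlocks₂₂ (S - 1) (Xb1 * L) hSpd).mp hblk'
  have e : (Xb1 * (L * S⁻¹)) * S * (Xb1 * (L * S⁻¹))ᵀ = Xb1 * L * S⁻¹ * (Xb1 * L)ᴴ := by
    simp only [Matrix.conjTranspose_eq_transpose_of_trivial, Matrix.transpose_mul,
      Matrix.transpose_nonsing_inv, hsym', Matrix.mul_assoc]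
    rw [Matrix.nonsing_inv_mul_cancel_left _ _ hdet]
  have hineq : (S - 1 - (Xb1 * (L * S⁻¹)) * S * (Xb1 * (L * S⁻¹))ᵀ).PosSemidef := by
    rw [e]; exact hschur
  refine ⟨hSpd, hineq, ?_, ?_⟩
  · rw [← Matrix.mul_assoc, ← hXL, Matrix.mul_nonsing_inv _ hdet]
  · exact Aux.specLt1_of_lyapIneq hn hS1 hineq

end MainAux

/-- Correspondence between the covariance-parameterized LQR and its convex
reparameterization (Lemma 9). -/
theorem stmt_7 {n m t : ℕ} (hn : 0 < n) (hm : 0 < m) (ht : 0 < t)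
    (U0 : Matrix (Fin m) (Fin t) ℝ) (X0 X1 : Matrix (Fin n) (Fin t) ℝ)
    (Q : Matrix (Fin n) (Fin n) ℝ) (R : Matrix (Fin m) (Fin m) ℝ)
    (hQ : Q.PosDef) (hR : R.PosDef)
    (hrank : (Dmat U0 X0).rank = m + n) :
    (∀ p ∈ repSet U0 X0 X1, p.2.PosDef ∧ p.1 * p.2⁻¹ ∈ feasSet U0 X0 X1) ∧
    ∀ V ∈ feasSet U0 X0 X1,
      IsLeast {r : ℝ | ∃ p ∈ repSet U0 X0 X1, p.1 * p.2⁻¹ = V ∧ r = fRep U0 X0 Q R p.1 p.2}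
        (Jcost U0 X0 X1 Q R V) := by
  have hpart1 : ∀ p ∈ repSet U0 X0 X1, p.2.PosDef ∧ p.1 * p.2⁻¹ ∈ feasSet U0 X0 X1 :=
    fun p hp => ⟨(repSet_struct hn U0 X0 X1 p hp).1, (repSet_struct hn U0 X0 X1 p hp).2.2⟩
  refine ⟨hpart1, ?_⟩
  intro V hV
  obtain ⟨hV1, hV2⟩ := hV
  set Xb0 := Xbar0 U0 X0 with hXb0
  set Xb1 := Xbar1 U0 X0 X1 with hXb1
  set Ub := Ubar U0 X0 with hUb
  set M := Xb1 * V with hM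
  set A := Q + Vᵀ * Ubᵀ * R * Ub * V with hA
  -- key identity for fRep
  have hrep : ∀ S : Matrix (Fin n) (Fin n) ℝ, Sᵀ = S → IsUnit S.det →
      fRep U0 X0 Q R (V * S) S = (A * S).trace := by
    intro S hsym hdet
    have e1 : V * S * S⁻¹ = V := Matrix.mul_nonsing_inv_cancel_right _ _ hdet
    have e2 : V * S * S⁻¹ * (V * S)ᵀ * Ubᵀ * R * Ub = V * S * Vᵀ * Ubᵀ * R * Ub := by
      rw [e1, Matrix.transpose_mul, hsym, ← Matrix.mul_assoc]
    have e3 : (V * S * Vᵀ * Ubᵀ * R * Ub).trace = (Vᵀ * Ubᵀ * R * Ub * V * S).trace := by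
      rw [show V * S * Vᵀ * Ubᵀ * R * Ub = (V * S) * (Vᵀ * Ubᵀ * R * Ub) by
        simp only [Matrix.mul_assoc]]
      rw [Matrix.trace_mul_comm]
      simp only [Matrix.mul_assoc]
    show (Q * S).trace + (V * S * S⁻¹ * (V * S)ᵀ * Ubᵀ * R * Ub).trace = (A * S).trace
    rw [e2, e3, hA, Matrix.add_mul, Matrix.trace_add]
  have hsum := Aux.summable_pows hV2
  have hltr : (lyap M)ᵀ = lyap M := Aux.lyap_transpose hV2
  have hlpd : (lyap M).PosDef := Aux.lyap_posDef hV2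
  have hldet : IsUnit (lyap M).det := (Matrix.isUnit_iff_isUnit_det _).mp hlpd.isUnit
  letI : Invertible (lyap M) := hlpd.isUnit.invertible
  have hSig : SigV U0 X0 X1 V = lyap M := rfl
  have hApsd : A.PosSemidef := by
    refine hQ.posSemidef.add ?_
    have h1 := hR.posSemidef.conjTranspose_mul_mul_same (Ub * V)
    rw [Matrix.conjTranspose_eq_transpose_of_trivial, Matrix.transpose_mul] at h1
    rwa [show Vᵀ * Ubᵀ * R * (Ub * V) = Vᵀ * Ubᵀ * R * Ub * V by
      simp only [Matrix.mul_assoc]] at h1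
  constructor
  · -- membership : the minimum is attained at (V * Σ_V, Σ_V)
    refine ⟨(V * lyap M, lyap M), ⟨hltr, ?_, ?_⟩, ?_, ?_⟩
    · show lyap M = Xb0 * (V * lyap M)
      rw [← Matrix.mul_assoc, hV1, Matrix.one_mul]
    · show (Matrix.fromBlocks (lyap M - 1) (Xb1 * (V * lyap M))
        ((Xb1 * (V * lyap M))ᵀ) (lyap M)).PosSemidef
      rw [← Matrix.conjTranspose_eq_transpose_of_trivial]
      refine (Matrix.PosDef.fromBlocks₂₂ _ _ hlpd).mpr ?_
      have e : Xb1 * (V * lyap M) * (lyap M)⁻¹ * (Xb1 * (V * lyap M))ᴴ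
          = M * lyap M * Mᵀ := by
        simp only [Matrix.conjTranspose_eq_transpose_of_trivial, Matrix.transpose_mul, hltr,
          hM, Matrix.mul_assoc]
        rw [← hM, hltr, Matrix.mul_nonsing_inv_cancel_left _ _ hldet]
      rw [e]
      have e2 : lyap M - 1 - M * lyap M * Mᵀ = 0 := by
        nth_rewrite 1 [Aux.lyap_fixed hV2]
        rw [add_sub_cancel_left, sub_self]
      rw [e2]
      exact Matrix.PosSemidef.zero
    · show V * lyap M * (lyap M)⁻¹ = V
      exact Matrix.mul_nonsing_inv_cancel_right _ _ hldet
    · show Jcost U0 X0 X1 Q R V = fRep U0 X0 Q R (V * lyap M) (lyap M)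
      rw [hrep (lyap M) hltr hldet]
      rfl
  · -- lower bound
    rintro r ⟨⟨L, S⟩, hmem, hLV, rfl⟩
    obtain ⟨hSpd, hineq, hfeas⟩ := repSet_struct hn U0 X0 X1 (L, S) hmem
    simp only at hSpd hineq hfeas hLV
    have hdetS : IsUnit S.det := (Matrix.isUnit_iff_isUnit_det S).mp hSpd.isUnit
    have hsymS : Sᵀ = S := hSpd.isHermitian
    have hL : L = V * S := by
      rw [← hLV]
      exact (Matrix.nonsing_inv_mul_cancel_right _ _ hdetS).symm
    rw [hLV] at hineq
    have hcmp : (S - lyap M).PosSemidef := Aux.lyap_le hV2 hSpd.posSemidef hineq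
    have hjf : fRep U0 X0 Q R L S = (A * S).trace := by
      rw [hL]; exact hrep S hsymS hdetS
    have hJ : Jcost U0 X0 X1 Q R V = (A * lyap M).trace := rfl
    have htr : (A * S).trace - (A * lyap M).trace = (A * (S - lyap M)).trace := by
      rw [Matrix.mul_sub, Matrix.trace_sub]
    have hnn : 0 ≤ (A * (S - lyap M)).trace := Aux.trace_mul_psd_nonneg hApsd hcmp
    show Jcost U0 X0 X1 Q R V ≤ fRep U0 X0 Q R L S
    rw [hjf, hJ]
    linarith
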